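/- Under the standing assumptions (n ≥ 3, q = p^h with h ≥ 2, and q ≥ max{32, 2^(2n−4)} if h > 2, q ≥ 2^(2n) if h = 2), for every i with 1 ≤ i ≤ n one has θ_i − Δ_{n,q}·q^(i−1) + 1 ≤ U(n,i,q), and for i = 1 this inequality is an equality. -/

import Mathlib

open Module

noncomputable section

/-- `pgTheta q m = 1 + q + … + q^m` for `m ≥ 0`, and `0` for `m < 0`. -/
def pgTheta (q : ℕ) (m : ℤ) : ℤ := ∑ i ∈ Finset.range (m + 1).toNat, (q : ℤ) ^ i

/-- `q^j`, truncated to `0` for negative exponents `j`. -/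
def pgQpow (q : ℕ) (j : ℤ) : ℤ := if j < 0 then 0 else (q : ℤ) ^ j.toNat

/-- `Δ_{i,q}` where `q = p^h`: `⌊√q / 2^(i-2)⌋` if `h > 2`, and `⌊p / 2^i⌋` if `h = 2`. -/
noncomputable def pgDelta (p h : ℕ) (i : ℤ) : ℤ :=
  if 2 < h then ⌊Real.sqrt ((p : ℝ) ^ h) / (2 : ℝ) ^ (i - 2)⌋
  else ⌊(p : ℝ) / (2 : ℝ) ^ i⌋

/-- `W(i,q) = (Δ_{i,q} - 1)·θ_{i-1}`. -/
noncomputable def pgW (p h : ℕ) (i : ℤ) : ℤ := (pgDelta p h i - 1) * pgTheta (p ^ h) (i - 1)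

/-- `U(n,i,q) = q^i − (Δ_{n,q} − 2)·⌊q^(i−1)⌋ − (i−2)·((q−1)·Δ_{n,q} + 1)·⌊q^(i−3)⌋ + θ_{i−3}`. -/
noncomputable def pgU (p h n : ℕ) (i : ℤ) : ℤ :=
  pgQpow (p ^ h) i - (pgDelta p h n - 2) * pgQpow (p ^ h) (i - 1)
    - (i - 2) * ((((p ^ h : ℕ) : ℤ) - 1) * pgDelta p h n + 1) * pgQpow (p ^ h) (i - 3)
    + pgTheta (p ^ h) (i - 3)

/-- `⌈w / θ_m⌉` as a natural number. -/
noncomputable def pgCeil (q w : ℕ) (m : ℤ) : ℕ := (⌈(w : ℚ) / ((pgTheta q m : ℤ) : ℚ)⌉).toNat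

lemma pgQpow_natCast (q k : ℕ) : pgQpow q (k : ℤ) = (q : ℤ) ^ k := by simp [pgQpow]

lemma pgTheta_natCast (q k : ℕ) :
    pgTheta q (k : ℤ) = ∑ i ∈ Finset.range (k + 1), (q : ℤ) ^ i := by simp [pgTheta]

lemma pgQpow_neg (q : ℕ) (j : ℤ) (hj : j < 0) : pgQpow q j = 0 := if_pos hj

lemma pgTheta_neg (q : ℕ) (m : ℤ) (hm : m < 0) : pgTheta q m = 0 := by
  rw [pgTheta, show (m + 1).toNat = 0 by omega]
  simp

lemma pgQpow_zero (q : ℕ) : pgQpow q 0 = 1 := by simp [pgQpow]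
lemma pgQpow_one (q : ℕ) : pgQpow q 1 = q := by simpa using pgQpow_natCast q 1
lemma pgQpow_two (q : ℕ) : pgQpow q 2 = (q:ℤ)^2 := by simpa using pgQpow_natCast q 2
lemma pgTheta_one (q : ℕ) : pgTheta q 1 = 1 + q := by
  simpa [Finset.sum_range_succ] using pgTheta_natCast q 1
lemma pgTheta_two (q : ℕ) : pgTheta q 2 = 1 + q + (q:ℤ)^2 := by
  have := pgTheta_natCast q 2
  simp [Finset.sum_range_succ] at this
  linarith

lemma pgU_one (p h n : ℕ) :
    pgU p h n 1 = ((p ^ h : ℕ) : ℤ) - pgDelta p h n + 2 := by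
  rw [pgU, show (1:ℤ) - 1 = 0 by norm_num, show (1:ℤ) - 3 = -2 by norm_num,
    show (1:ℤ) - 2 = -1 by norm_num, pgQpow_zero, pgQpow_one,
    pgQpow_neg (p ^ h) (-2) (by norm_num), pgTheta_neg (p ^ h) (-2) (by norm_num)]
  ring

lemma pgU_two (p h n : ℕ) :
    pgU p h n 2 = ((p ^ h : ℕ) : ℤ) ^ 2 - (pgDelta p h n - 2) * ((p ^ h : ℕ) : ℤ) := by
  rw [pgU, show (2:ℤ) - 1 = 1 by norm_num, show (2:ℤ) - 3 = -1 by norm_num,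
    show (2:ℤ) - 2 = 0 by norm_num, pgQpow_one, pgQpow_two,
    pgQpow_neg (p ^ h) (-1) (by norm_num), pgTheta_neg (p ^ h) (-1) (by norm_num)]
  ring

lemma pgU_eval (p h n j : ℕ) :
    pgU p h n ((j : ℤ) + 3) =
      ((p ^ h : ℕ) : ℤ) ^ (j + 3) - (pgDelta p h n - 2) * ((p ^ h : ℕ) : ℤ) ^ (j + 2)
        - ((j : ℤ) + 1) * ((((p ^ h : ℕ) : ℤ) - 1) * pgDelta p h n + 1) * ((p ^ h : ℕ) : ℤ) ^ j
        + ∑ t ∈ Finset.range (j + 1), ((p ^ h : ℕ) : ℤ) ^ t := by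
  have a1 : pgQpow (p ^ h) ((j : ℤ) + 3) = ((p ^ h : ℕ) : ℤ) ^ (j + 3) := by
    rw [show ((j : ℤ) + 3) = ((j + 3 : ℕ) : ℤ) by push_cast; ring, pgQpow_natCast]
  have a2 : pgQpow (p ^ h) ((j : ℤ) + 3 - 1) = ((p ^ h : ℕ) : ℤ) ^ (j + 2) := by
    rw [show ((j : ℤ) + 3 - 1) = ((j + 2 : ℕ) : ℤ) by push_cast; ring, pgQpow_natCast]
  have a3 : pgQpow (p ^ h) ((j : ℤ) + 3 - 3) = ((p ^ h : ℕ) : ℤ) ^ j := by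
    rw [show ((j : ℤ) + 3 - 3) = ((j : ℕ) : ℤ) by push_cast; ring, pgQpow_natCast]
  have a4 : pgTheta (p ^ h) ((j : ℤ) + 3 - 3) =
      ∑ t ∈ Finset.range (j + 1), ((p ^ h : ℕ) : ℤ) ^ t := by
    rw [show ((j : ℤ) + 3 - 3) = ((j : ℕ) : ℤ) by push_cast; ring, pgTheta_natCast]
  rw [pgU, a1, a2, a3, a4]
  ring

/-- Proposition: `θ_i − Δ_{n,q}·q^(i−1) + 1 ≤ U(n,i,q)` for all `1 ≤ i ≤ n`,
with equality when `i = 1`. -/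
theorem statement_2 (p h n : ℕ) (hp : p.Prime) (hh : 2 ≤ h) (hn : 3 ≤ n)
    (hq1 : 2 < h → max 32 (2 ^ (2 * n - 4)) ≤ p ^ h)
    (hq2 : h = 2 → 2 ^ (2 * n) ≤ p ^ h) :
    (∀ i : ℕ, 1 ≤ i → i ≤ n →
      pgTheta (p ^ h) i - pgDelta p h n * pgQpow (p ^ h) ((i : ℤ) - 1) + 1 ≤
        pgU p h n i) ∧
    pgTheta (p ^ h) 1 - pgDelta p h n * pgQpow (p ^ h) 0 + 1 = pgU p h n 1 := by
  have hq2n4 : 2 ^ (2 * n - 4) ≤ p ^ h := by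
    rcases eq_or_lt_of_le hh with h2 | h2
    · exact le_trans (Nat.pow_le_pow_right (by norm_num : 1 ≤ 2) (by omega)) (hq2 h2.symm)
    · exact le_trans (le_max_right _ _) (hq1 h2)
  have hq32 : 32 ≤ p ^ h := by
    rcases eq_or_lt_of_le hh with h2 | h2
    · exact le_trans (Nat.pow_le_pow_right (by norm_num : 1 ≤ 2) (by omega : 5 ≤ 2 * n))
        (hq2 h2.symm)
    · exact le_trans (le_max_left _ _) (hq1 h2)
  have hQ32 : (32 : ℤ) ≤ ((p ^ h : ℕ) : ℤ) := by exact_mod_cast hq32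
  have hnq : n < p ^ h := by
    rcases Nat.lt_or_ge n 4 with h4 | h4
    · omega
    · have h1 : n < 2 ^ n := Nat.lt_two_pow_self (n := n)
      have h2 : 2 ^ n ≤ 2 ^ (2 * n - 4) := Nat.pow_le_pow_right (by norm_num) (by omega)
      omega
  have hsq : Nat.sqrt (p ^ h) < p ^ h := Nat.sqrt_lt_self (by omega)
  have hD0 : 0 ≤ pgDelta p h n := by
    rw [pgDelta]
    split
    · exact Int.floor_nonneg.mpr (div_nonneg (Real.sqrt_nonneg _) (by positivity))
    · exact Int.floor_nonneg.mpr (div_nonneg (by positivity) (by positivity))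
  have hDs : pgDelta p h n * 2 ^ (n - 2) ≤ ((Nat.sqrt (p ^ h) : ℕ) : ℤ) := by
    have key : ∀ a : ℤ, 0 ≤ a → (a : ℝ) ≤ Real.sqrt ((p ^ h : ℕ) : ℝ) →
        a ≤ ((Nat.sqrt (p ^ h) : ℕ) : ℤ) := by
      intro a ha0 har
      have hq0 : (0 : ℝ) ≤ ((p ^ h : ℕ) : ℝ) := by positivity
      have hmul := mul_self_le_mul_self (show (0:ℝ) ≤ (a : ℝ) by exact_mod_cast ha0) har
      rw [Real.mul_self_sqrt hq0] at hmul
      have h3 : a * a ≤ ((p ^ h : ℕ) : ℤ) := by exact_mod_cast hmul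
      have hb : ((a.toNat : ℤ)) = a := Int.toNat_of_nonneg ha0
      have h4 : a.toNat * a.toNat ≤ p ^ h := by
        rw [← hb] at h3; exact_mod_cast h3
      have h5 : a.toNat ≤ Nat.sqrt (p ^ h) := Nat.le_sqrt.mpr h4
      omega
    rcases lt_or_ge 2 h with h2 | h2
    · have hDval : pgDelta p h n = ⌊Real.sqrt ((p : ℝ) ^ h) / (2 : ℝ) ^ ((n : ℤ) - 2)⌋ := by
        rw [pgDelta, if_pos h2]
      have ecast : ((p : ℝ) ^ h) = ((p ^ h : ℕ) : ℝ) := by push_cast; ring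
      have ez : (2 : ℝ) ^ ((n : ℤ) - 2) = (2 : ℝ) ^ (n - 2) := by
        rw [show ((n : ℤ) - 2) = ((n - 2 : ℕ) : ℤ) by omega, zpow_natCast]
      have h1 : ((pgDelta p h n : ℤ) : ℝ) ≤ Real.sqrt ((p : ℝ) ^ h) / (2 : ℝ) ^ ((n : ℤ) - 2) := by
        rw [hDval]; exact Int.floor_le _
      rw [ecast, ez] at h1
      have h2' : ((pgDelta p h n : ℤ) : ℝ) * (2 : ℝ) ^ (n - 2) ≤ Real.sqrt ((p ^ h : ℕ) : ℝ) :=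
        (le_div_iff₀ (by positivity)).mp h1
      apply key _ (by positivity)
      have hc : ((pgDelta p h n * 2 ^ (n - 2) : ℤ) : ℝ) =
          ((pgDelta p h n : ℤ) : ℝ) * (2 : ℝ) ^ (n - 2) := by push_cast; ring
      rw [hc]; exact h2'
    · have hDval : pgDelta p h n = ⌊(p : ℝ) / (2 : ℝ) ^ (n : ℤ)⌋ := by
        rw [pgDelta, if_neg (by omega)]
      have hh2 : h = 2 := by omega
      have ez : (2 : ℝ) ^ (n : ℤ) = (2 : ℝ) ^ n := by rw [zpow_natCast]
      have h1 : ((pgDelta p h n : ℤ) : ℝ) ≤ (p : ℝ) / (2 : ℝ) ^ n := by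
        rw [hDval, ez]; exact Int.floor_le _
      have h2' : ((pgDelta p h n : ℤ) : ℝ) * (2 : ℝ) ^ n ≤ (p : ℝ) :=
        (le_div_iff₀ (by positivity)).mp h1
      have h3 : pgDelta p h n * 2 ^ n ≤ (p : ℤ) := by exact_mod_cast h2'
      have h4 : pgDelta p h n * 2 ^ (n - 2) ≤ pgDelta p h n * 2 ^ n :=
        mul_le_mul_of_nonneg_left (pow_le_pow_right₀ (by norm_num) (by omega)) hD0
      have h5 : p ≤ Nat.sqrt (p ^ h) := Nat.le_sqrt.mpr (by rw [hh2]; ring_nf; exact le_refl _)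
      have h6 : (p : ℤ) ≤ ((Nat.sqrt (p ^ h) : ℕ) : ℤ) := by exact_mod_cast h5
      linarith
  have hnD : ((n : ℤ) - 2) * pgDelta p h n ≤ ((Nat.sqrt (p ^ h) : ℕ) : ℤ) := by
    have h1 : ((n : ℤ) - 2) ≤ 2 ^ (n - 2) := by
      have h2 : ((n - 2 : ℕ) : ℤ) < (2 : ℤ) ^ (n - 2) := by
        exact_mod_cast Nat.lt_two_pow_self (n := n - 2)
      omega
    calc ((n : ℤ) - 2) * pgDelta p h n ≤ 2 ^ (n - 2) * pgDelta p h n :=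
          mul_le_mul_of_nonneg_right h1 hD0
      _ = pgDelta p h n * 2 ^ (n - 2) := by ring
      _ ≤ _ := hDs
  have hkey : ((n : ℤ) - 2) * ((((p ^ h : ℕ) : ℤ) - 1) * pgDelta p h n + 1) + 1 ≤
      ((p ^ h : ℕ) : ℤ) * (((p ^ h : ℕ) : ℤ) - 1) := by
    have h1 : ((Nat.sqrt (p ^ h) : ℕ) : ℤ) + 1 ≤ ((p ^ h : ℕ) : ℤ) := by exact_mod_cast hsq
    have h2 : (n : ℤ) + 1 ≤ ((p ^ h : ℕ) : ℤ) := by exact_mod_cast hnq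
    have h3 : (0 : ℤ) ≤ ((p ^ h : ℕ) : ℤ) - 1 := by linarith
    have h4 : (0 : ℤ) ≤ ((p ^ h : ℕ) : ℤ) - ((Nat.sqrt (p ^ h) : ℕ) : ℤ) - 1 := by linarith
    nlinarith [mul_le_mul_of_nonneg_left hnD h3, mul_nonneg h3 h4]
  have heq : pgTheta (p ^ h) 1 - pgDelta p h n * pgQpow (p ^ h) 0 + 1 = pgU p h n 1 := by
    rw [pgU_one, pgTheta_one, pgQpow_zero]
    ring
  refine ⟨fun i hi1 hin => ?_, heq⟩
  rcases Nat.lt_or_ge i 3 with hi3 | hi3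
  · interval_cases i
    · simpa using le_of_eq heq
    · rw [show ((2:ℕ):ℤ) = (2:ℤ) by norm_num, show ((2:ℤ) - 1) = 1 by norm_num,
        pgTheta_two, pgQpow_one, pgU_two]
      have hD2 : pgDelta p h n * ((p ^ h : ℕ) : ℤ) - (pgDelta p h n - 2) * ((p ^ h : ℕ) : ℤ)
          = 2 * ((p ^ h : ℕ) : ℤ) := by ring
      nlinarith [hQ32]
  · obtain ⟨j, rfl⟩ : ∃ j, i = j + 3 := ⟨i - 3, by omega⟩
    have hQ1 : (1 : ℤ) ≤ ((p ^ h : ℕ) : ℤ) := by linarith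
    have hQj : (1 : ℤ) ≤ ((p ^ h : ℕ) : ℤ) ^ j := by
      calc (1:ℤ) = 1 ^ j := (one_pow j).symm
        _ ≤ _ := pow_le_pow_left₀ (by norm_num) hQ1 j
    have hjn : (j : ℤ) + 1 ≤ (n : ℤ) - 2 := by
      have : j + 3 ≤ n := hin
      omega
    have hM1 : (1 : ℤ) ≤ (((p ^ h : ℕ) : ℤ) - 1) * pgDelta p h n + 1 := by nlinarith [mul_nonneg (show (0:ℤ) ≤ ((p ^ h : ℕ) : ℤ) - 1 by linarith) hD0]
    -- rewrite goal
    have ei : ((j + 3 : ℕ) : ℤ) = (j : ℤ) + 3 := by push_cast; ring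
    have L1 : pgTheta (p ^ h) ((j + 3 : ℕ) : ℤ) =
        (∑ t ∈ Finset.range (j + 1), ((p ^ h : ℕ) : ℤ) ^ t) + ((p ^ h : ℕ) : ℤ) ^ (j + 1)
          + ((p ^ h : ℕ) : ℤ) ^ (j + 2) + ((p ^ h : ℕ) : ℤ) ^ (j + 3) := by
      rw [pgTheta_natCast]
      rw [show j + 3 + 1 = (j + 1) + 1 + 1 + 1 by ring, Finset.sum_range_succ,
        Finset.sum_range_succ, Finset.sum_range_succ]
    have L2 : pgQpow (p ^ h) (((j + 3 : ℕ) : ℤ) - 1) = ((p ^ h : ℕ) : ℤ) ^ (j + 2) := by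
      rw [show (((j + 3 : ℕ) : ℤ) - 1) = ((j + 2 : ℕ) : ℤ) by push_cast; ring, pgQpow_natCast]
    have L3 : pgU p h n ((j + 3 : ℕ) : ℤ) =
        ((p ^ h : ℕ) : ℤ) ^ (j + 3) - (pgDelta p h n - 2) * ((p ^ h : ℕ) : ℤ) ^ (j + 2)
          - ((j : ℤ) + 1) * ((((p ^ h : ℕ) : ℤ) - 1) * pgDelta p h n + 1) * ((p ^ h : ℕ) : ℤ) ^ j
          + ∑ t ∈ Finset.range (j + 1), ((p ^ h : ℕ) : ℤ) ^ t := by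
      rw [ei, pgU_eval]
    have hstep : ((j : ℤ) + 1) * ((((p ^ h : ℕ) : ℤ) - 1) * pgDelta p h n + 1)
          * ((p ^ h : ℕ) : ℤ) ^ j + 1 ≤
        ((p ^ h : ℕ) : ℤ) ^ (j + 2) - ((p ^ h : ℕ) : ℤ) ^ (j + 1) := by
      have hQj0 : (0 : ℤ) ≤ ((p ^ h : ℕ) : ℤ) ^ j := by positivity
      have c1 : ((j : ℤ) + 1) * ((((p ^ h : ℕ) : ℤ) - 1) * pgDelta p h n + 1)
            * ((p ^ h : ℕ) : ℤ) ^ j ≤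
          ((n : ℤ) - 2) * ((((p ^ h : ℕ) : ℤ) - 1) * pgDelta p h n + 1)
            * ((p ^ h : ℕ) : ℤ) ^ j := by
        apply mul_le_mul_of_nonneg_right _ hQj0
        exact mul_le_mul_of_nonneg_right hjn (by linarith)
      have c2 : (((n : ℤ) - 2) * ((((p ^ h : ℕ) : ℤ) - 1) * pgDelta p h n + 1) + 1)
            * ((p ^ h : ℕ) : ℤ) ^ j ≤
          (((p ^ h : ℕ) : ℤ) * (((p ^ h : ℕ) : ℤ) - 1)) * ((p ^ h : ℕ) : ℤ) ^ j :=
        mul_le_mul_of_nonneg_right hkey hQj0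
      have c3 : (((p ^ h : ℕ) : ℤ) * (((p ^ h : ℕ) : ℤ) - 1)) * ((p ^ h : ℕ) : ℤ) ^ j =
          ((p ^ h : ℕ) : ℤ) ^ (j + 2) - ((p ^ h : ℕ) : ℤ) ^ (j + 1) := by ring
      rw [c3] at c2
      linarith only [c1, c2, hQj]
    rw [L1, L2, L3]
    linarith only [hstep]
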